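/- Let a = −1, b = 1, c = 0. For every (a1,a2,b1,b2,c1,c2) ∈ ℝ^6 satisfying b1 = a1 ∈ [0,1], b2 = a2, c1 = a1/2 − 1/4, c2 = a1²/2 − a1/2 + a2/2 + 1/8, a2 ≤ 0 if a1 = 1, and a2 ≥ 0 if a1 = 0, there exists a sequence ε → 0+ that admits the expansion data (a1,a2,b1,b2,c1,c2). -/

import Mathlib

set_option maxHeartbeats 1000000


open Filter Asymptotics Set

noncomputable def kk1 (a c ε : ℝ) : ℤ := ⌈a / ε - c⌉
noncomputable def kk2 (b c ε : ℝ) : ℤ := ⌊b / ε - c⌋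
noncomputable def NN (a b c ε : ℝ) : ℤ := kk2 b c ε - kk1 a c ε + 1

def AdmitsExpansion (a b c : ℝ) (ε : ℕ → ℝ) (a1 a2 b1 b2 c1 c2 : ℝ) : Prop :=
  (∀ n, 0 < ε n) ∧ Tendsto ε atTop (nhds 0) ∧
  (fun n => ε n * (c + (kk1 a c (ε n) : ℝ)) - a - (a1 * ε n + a2 * ε n ^ 2))
    =o[atTop] (fun n => ε n ^ 2) ∧
  (fun n => b - ε n * (c + (kk2 b c (ε n) : ℝ)) - (b1 * ε n + b2 * ε n ^ 2))
    =o[atTop] (fun n => ε n ^ 2) ∧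
  (fun n => 1 / ((NN a b c (ε n) : ℝ) * ε n) - (1 / (b - a) + c1 * ε n + c2 * ε n ^ 2))
    =o[atTop] (fun n => ε n ^ 2)

/-- auxiliary correction term -/
noncomputable def uu (a1 a2 : ℝ) (n : ℕ) : ℝ :=
  a2 * ((n : ℝ) + a1)⁻¹ + (1 - 2 * a1) * ((n : ℝ)⁻¹) ^ 2

/-- auxiliary fractional part target -/
noncomputable def tt (a1 a2 : ℝ) (n : ℕ) : ℝ := a1 + uu a1 a2 n

/-- the witness sequence -/
noncomputable def epsq (a1 a2 : ℝ) (n : ℕ) : ℝ := (max ((n : ℝ) + tt a1 a2 n) 1)⁻¹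

/-- existence of a sequence `ε → 0⁺` admitting any given
compatible expansion data for `a = −1`, `b = 1`, `c = 0`. -/
theorem stmt3 (a1 a2 b1 b2 c1 c2 : ℝ)
    (hb1 : b1 = a1) (ha1 : a1 ∈ Set.Icc (0:ℝ) 1) (hb2 : b2 = a2)
    (hc1 : c1 = a1 / 2 - 1 / 4) (hc2 : c2 = a1 ^ 2 / 2 - a1 / 2 + a2 / 2 + 1 / 8)
    (h1 : a1 = 1 → a2 ≤ 0) (h0 : a1 = 0 → 0 ≤ a2) :
    ∃ ε : ℕ → ℝ, AdmitsExpansion (-1) 1 0 ε a1 a2 b1 b2 c1 c2 := by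
  rw [hb1, hb2, hc1, hc2]
  obtain ⟨ha0, ha1'⟩ := ha1
  refine ⟨epsq a1 a2, ?_⟩
  have hmaxpos : ∀ n : ℕ, (0:ℝ) < max ((n : ℝ) + tt a1 a2 n) 1 :=
    fun n => lt_of_lt_of_le one_pos (le_max_right _ _)
  have hεpos : ∀ n, 0 < epsq a1 a2 n := fun n => inv_pos.mpr (hmaxpos n)
  -- basic limits
  have hn : Tendsto (fun n : ℕ => (n : ℝ)) atTop atTop := tendsto_natCast_atTop_atTop
  have hL1 : Tendsto (fun n : ℕ => ((n : ℝ) + a1)⁻¹) atTop (nhds 0) :=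
    (tendsto_atTop_add_const_right _ a1 hn).inv_tendsto_atTop
  have hL2 : Tendsto (fun n : ℕ => ((n : ℝ))⁻¹) atTop (nhds 0) := hn.inv_tendsto_atTop
  have hL3 : Tendsto (fun n : ℕ => (2 * (n : ℝ) + 1)⁻¹) atTop (nhds 0) :=
    (tendsto_atTop_add_const_right _ 1
      (hn.const_mul_atTop (by norm_num : (0:ℝ) < 2))).inv_tendsto_atTop
  have hu : Tendsto (fun n => uu a1 a2 n) atTop (nhds 0) := by
    have := (hL1.const_mul a2).add ((hL2.pow 2).const_mul (1 - 2 * a1))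
    simpa [uu, mul_comm] using this
  have ht : Tendsto (fun n => tt a1 a2 n) atTop (nhds a1) := by
    have := (tendsto_const_nhds (x := a1)).add hu
    simpa [tt] using this
  -- eventual facts
  have hev1 : ∀ᶠ n : ℕ in atTop, 0 ≤ tt a1 a2 n := by
    rcases eq_or_lt_of_le ha0 with h | h
    · have ha2 : 0 ≤ a2 := h0 h.symm
      subst h
      filter_upwards [eventually_ge_atTop 1] with n hn1
      have hnp : (0:ℝ) < n := by exact_mod_cast Nat.lt_of_lt_of_le Nat.zero_lt_one hn1
      have h1' : (0:ℝ) ≤ a2 * ((n : ℝ) + 0)⁻¹ := by positivity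
      have h2' : (0:ℝ) ≤ (1 - 2 * 0) * ((n : ℝ)⁻¹) ^ 2 := by positivity
      simp only [tt, uu]
      linarith
    · exact (ht.eventually (eventually_gt_nhds h)).mono fun n hn => hn.le
  have hev2 : ∀ᶠ n : ℕ in atTop, tt a1 a2 n < 1 := by
    rcases eq_or_lt_of_le ha1' with h | h
    · have ha2 : a2 ≤ 0 := h1 h
      subst h
      filter_upwards [eventually_ge_atTop 1] with n hn1
      have hnp : (0:ℝ) < n := by exact_mod_cast Nat.lt_of_lt_of_le Nat.zero_lt_one hn1
      have h1' : a2 * ((n : ℝ) + 1)⁻¹ ≤ 0 :=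
        mul_nonpos_of_nonpos_of_nonneg ha2 (by positivity)
      have h2' : (0:ℝ) < ((n : ℝ)⁻¹) ^ 2 := by positivity
      simp only [tt, uu]
      nlinarith
    · exact ht.eventually (eventually_lt_nhds h)
  -- the key eventual description
  have hkey : ∀ᶠ n : ℕ in atTop,
      epsq a1 a2 n = ((n : ℝ) + tt a1 a2 n)⁻¹ ∧
      kk1 (-1) 0 (epsq a1 a2 n) = -(n : ℤ) ∧
      kk2 1 0 (epsq a1 a2 n) = (n : ℤ) ∧
      (0:ℝ) < (n : ℝ) ∧ (0:ℝ) < (n : ℝ) + a1 ∧ (0:ℝ) < (n : ℝ) + tt a1 a2 n := by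
    filter_upwards [hev1, hev2, eventually_ge_atTop 1] with n h₁ h₂ h₃
    have hnp : (1:ℝ) ≤ n := by exact_mod_cast h₃
    have hx1 : (1:ℝ) ≤ (n : ℝ) + tt a1 a2 n := by linarith
    have hxpos : (0:ℝ) < (n : ℝ) + tt a1 a2 n := by linarith
    have hε : epsq a1 a2 n = ((n : ℝ) + tt a1 a2 n)⁻¹ := by
      simp [epsq, max_eq_left hx1]
    have hfl : ⌊(n : ℝ) + tt a1 a2 n⌋ = (n : ℤ) := by
      rw [Int.floor_eq_iff]
      constructor
      · push_cast; linarith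
      · push_cast; linarith
    refine ⟨hε, ?_, ?_, by linarith, by linarith, hxpos⟩
    · have : (-1) / epsq a1 a2 n - 0 = -((n : ℝ) + tt a1 a2 n) := by
        rw [hε]; field_simp; simp
      rw [kk1, this, Int.ceil_neg, hfl]
    · have : (1:ℝ) / epsq a1 a2 n - 0 = (n : ℝ) + tt a1 a2 n := by
        rw [hε]; field_simp; simp
      rw [kk2, this, hfl]
  constructor
  · exact hεpos
  refine ⟨?_, ?_, ?_, ?_⟩
  -- tendsto 0
  · have hM : Tendsto (fun n : ℕ => max ((n : ℝ) + tt a1 a2 n) 1) atTop atTop :=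
      tendsto_atTop_mono' _
        (hev1.mono fun n h => (le_add_of_nonneg_right h).trans (le_max_left _ _)) hn
    exact hM.inv_tendsto_atTop
  -- condition A
  · rw [isLittleO_iff_tendsto fun n h => absurd h (pow_ne_zero 2 (hεpos n).ne')]
    have hS : Tendsto (fun n : ℕ => -(a2 * a1) * ((n : ℝ) + a1)⁻¹
        + (1 - 2 * a1) * ((n : ℝ))⁻¹ + uu a1 a2 n * tt a1 a2 n) atTop (nhds 0) := by
      have := ((hL1.const_mul (-(a2 * a1))).add (hL2.const_mul (1 - 2 * a1))).add (hu.mul ht)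
      simpa using this
    refine hS.congr' ?_
    filter_upwards [hkey] with n ⟨hε, hk1, hk2, hn0, hna, hnt⟩
    have h2 : ((n : ℝ)) ≠ 0 := hn0.ne'
    have h3 : ((n : ℝ) + a1) ≠ 0 := hna.ne'
    have h4 : ((n : ℝ) + tt a1 a2 n) ≠ 0 := hnt.ne'
    have hstep2 : uu a1 a2 n * (n : ℝ)
        = -(a2 * a1) * ((n : ℝ) + a1)⁻¹ + (1 - 2 * a1) * ((n : ℝ))⁻¹ + a2 := by
      simp only [uu]; field_simp; ring
    have trans1 : -(a2 * a1) * ((n : ℝ) + a1)⁻¹ + (1 - 2 * a1) * ((n : ℝ))⁻¹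
          + uu a1 a2 n * tt a1 a2 n
        = (tt a1 a2 n - a1) * ((n : ℝ) + tt a1 a2 n) - a2 := by
      simp only [tt]; linear_combination -hstep2
    rw [trans1, hk1, hε]
    push_cast
    field_simp
    ring
  -- condition B
  · rw [isLittleO_iff_tendsto fun n h => absurd h (pow_ne_zero 2 (hεpos n).ne')]
    have hS : Tendsto (fun n : ℕ => -(a2 * a1) * ((n : ℝ) + a1)⁻¹
        + (1 - 2 * a1) * ((n : ℝ))⁻¹ + uu a1 a2 n * tt a1 a2 n) atTop (nhds 0) := by
      have := ((hL1.const_mul (-(a2 * a1))).add (hL2.const_mul (1 - 2 * a1))).add (hu.mul ht)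
      simpa using this
    refine hS.congr' ?_
    filter_upwards [hkey] with n ⟨hε, hk1, hk2, hn0, hna, hnt⟩
    have h2 : ((n : ℝ)) ≠ 0 := hn0.ne'
    have h3 : ((n : ℝ) + a1) ≠ 0 := hna.ne'
    have h4 : ((n : ℝ) + tt a1 a2 n) ≠ 0 := hnt.ne'
    have hstep2 : uu a1 a2 n * (n : ℝ)
        = -(a2 * a1) * ((n : ℝ) + a1)⁻¹ + (1 - 2 * a1) * ((n : ℝ))⁻¹ + a2 := by
      simp only [uu]; field_simp; ring
    have trans1 : -(a2 * a1) * ((n : ℝ) + a1)⁻¹ + (1 - 2 * a1) * ((n : ℝ))⁻¹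
          + uu a1 a2 n * tt a1 a2 n
        = (tt a1 a2 n - a1) * ((n : ℝ) + tt a1 a2 n) - a2 := by
      simp only [tt]; linear_combination -hstep2
    rw [trans1, hk2, hε]
    push_cast
    field_simp
    ring
  -- condition C
  · rw [isLittleO_iff_tendsto fun n h => absurd h (pow_ne_zero 2 (hεpos n).ne')]
    have hS : Tendsto (fun n : ℕ => (-(a2 * a1) / 2) * ((n : ℝ) + a1)⁻¹
        + ((1 - 2 * a1) / 2) * ((n : ℝ))⁻¹
        + uu a1 a2 n * (1/4 - (a1/2 - 1/4) + tt a1 a2 n + a1 - 1)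
        + (tt a1 a2 n - 1/2) ^ 3 * (2 * (n : ℝ) + 1)⁻¹) atTop (nhds 0) := by
      have t1 := hL1.const_mul (-(a2 * a1) / 2)
      have t2 := hL2.const_mul ((1 - 2 * a1) / 2)
      have t3 := hu.mul (((((tendsto_const_nhds (x := (1:ℝ)/4 - (a1/2 - 1/4))).add
        ht).add (tendsto_const_nhds (x := a1))).sub (tendsto_const_nhds (x := (1:ℝ)))))
      have t4 := ((ht.sub (tendsto_const_nhds (x := (1:ℝ)/2))).pow 3).mul hL3
      have := ((t1.add t2).add t3).add t4
      simpa using this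
    refine hS.congr' ?_
    filter_upwards [hkey] with n ⟨hε, hk1, hk2, hn0, hna, hnt⟩
    have h2 : ((n : ℝ)) ≠ 0 := hn0.ne'
    have h3 : ((n : ℝ) + a1) ≠ 0 := hna.ne'
    have h4 : ((n : ℝ) + tt a1 a2 n) ≠ 0 := hnt.ne'
    have h5 : (2 * (n : ℝ) + 1) ≠ 0 := by positivity
    have hstep2 : uu a1 a2 n * (n : ℝ)
        = -(a2 * a1) * ((n : ℝ) + a1)⁻¹ + (1 - 2 * a1) * ((n : ℝ))⁻¹ + a2 := by
      simp only [uu]; field_simp; ring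
    have hNN : NN (-1) 1 0 (epsq a1 a2 n) = 2 * (n : ℤ) + 1 := by
      rw [NN, hk1, hk2]; ring
    have trans1 : (-(a2 * a1) / 2) * ((n : ℝ) + a1)⁻¹ + ((1 - 2 * a1) / 2) * ((n : ℝ))⁻¹
          + uu a1 a2 n * (1/4 - (a1/2 - 1/4) + tt a1 a2 n + a1 - 1)
          + (tt a1 a2 n - 1/2) ^ 3 * (2 * (n : ℝ) + 1)⁻¹
        = (tt a1 a2 n - 1/2) * (2 * (n : ℝ) + 1) / 4 + (tt a1 a2 n - 1/2) ^ 2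
          + (tt a1 a2 n - 1/2) ^ 3 * (2 * (n : ℝ) + 1)⁻¹
          - (a1/2 - 1/4) * ((n : ℝ) + tt a1 a2 n)
          - (a1 ^ 2 / 2 - a1 / 2 + a2 / 2 + 1/8) := by
      simp only [tt]; linear_combination -hstep2 / 2
    rw [trans1, hNN, hε]
    push_cast
    field_simp
    ring
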